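/- Let H be the join of two finite simple graphs H1 and H2 (the disjoint union of H1 and H2 together with all edges between V(H1) and V(H2)). Then H is {P4, K1 ∪ K3}-free if and only if both H1 and H2 are {P4, K1 ∪ K3}-free. -/

import Mathlib

open SimpleGraph

/-- `G` is `H`-free: no induced subgraph of `G` is isomorphic to `H`
(an induced copy is a graph embedding). -/
def InducedFree {α β : Type*} (H : SimpleGraph β) (G : SimpleGraph α) : Prop :=
  ¬ Nonempty (H ↪g G)

/-- The join of two graphs: their disjoint union together with all edges
between the two vertex sets. -/
def graphJoin {α β : Type*} (H1 : SimpleGraph α) (H2 : SimpleGraph β) :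
    SimpleGraph (α ⊕ β) where
  Adj x y :=
    Sum.elim (fun a => Sum.elim (fun b => H1.Adj a b) (fun _ => True) y)
             (fun a => Sum.elim (fun _ => True) (fun b => H2.Adj a b) y) x
  symm := ⟨by
    rintro (a|a) (b|b) h
    · exact h.symm
    · trivial
    · trivial
    · exact h.symm⟩
  loopless := ⟨by
    rintro (a|a) h
    · exact H1.irrefl h
    · exact H2.irrefl h⟩

/-- The path on four vertices. -/
def P4 : SimpleGraph (Fin 4) := fromEdgeSet {s(0,1), s(1,2), s(2,3)}

/-- `K1 ∪ K3`: a triangle `1,2,3` together with the isolated vertex `0`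
(the complement of the claw). -/
def K1uK3 : SimpleGraph (Fin 4) := fromEdgeSet {s(1,2), s(1,3), s(2,3)}

section Aux
variable {α β : Type*} {H1 : SimpleGraph α} {H2 : SimpleGraph β}

private def inlEmb (H1 : SimpleGraph α) (H2 : SimpleGraph β) : H1 ↪g graphJoin H1 H2 :=
  ⟨⟨Sum.inl, fun _ _ h => Sum.inl_injective h⟩, Iff.rfl⟩

private def inrEmb (H1 : SimpleGraph α) (H2 : SimpleGraph β) : H2 ↪g graphJoin H1 H2 :=
  ⟨⟨Sum.inr, fun _ _ h => Sum.inr_injective h⟩, Iff.rfl⟩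

private lemma left_emb {G : SimpleGraph (Fin 4)} (f : G ↪g graphJoin H1 H2)
    (h : ∀ i, ∃ a, f i = Sum.inl a) : Nonempty (G ↪g H1) := by
  choose g hg using h
  refine ⟨⟨⟨g, fun i j hij => f.injective (by rw [hg i, hg j, hij])⟩, fun {i j} => ?_⟩⟩
  have := f.map_rel_iff (a := i) (b := j)
  rw [hg i, hg j] at this
  exact this

private lemma right_emb {G : SimpleGraph (Fin 4)} (f : G ↪g graphJoin H1 H2)
    (h : ∀ i, ∃ b, f i = Sum.inr b) : Nonempty (G ↪g H2) := by
  choose g hg using h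
  refine ⟨⟨⟨g, fun i j hij => f.injective (by rw [hg i, hg j, hij])⟩, fun {i j} => ?_⟩⟩
  have := f.map_rel_iff (a := i) (b := j)
  rw [hg i, hg j] at this
  exact this

private lemma crossLR {G : SimpleGraph (Fin 4)} (f : G ↪g graphJoin H1 H2) {i j : Fin 4} {a b}
    (hij : ¬ G.Adj i j) (ha : f i = Sum.inl a) (hb : f j = Sum.inr b) : False :=
  hij (f.map_rel_iff.mp (by rw [ha, hb]; trivial))

private lemma crossRL {G : SimpleGraph (Fin 4)} (f : G ↪g graphJoin H1 H2) {i j : Fin 4} {a b}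
    (hij : ¬ G.Adj i j) (ha : f i = Sum.inr a) (hb : f j = Sum.inl b) : False :=
  hij (f.map_rel_iff.mp (by rw [ha, hb]; trivial))

private lemma split {G : SimpleGraph (Fin 4)}
    (h02 : ¬ G.Adj 0 2) (h03 : ¬ G.Adj 0 3) (h1 : ¬ G.Adj 0 1 ∨ ¬ G.Adj 1 3)
    (f : G ↪g graphJoin H1 H2) :
    (∀ i, ∃ a, f i = Sum.inl a) ∨ (∀ i, ∃ b, f i = Sum.inr b) := by
  cases hf0 : f 0 with
  | inl a0 =>
    cases hf2 : f 2 with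
    | inr b2 => exact (crossLR f h02 hf0 hf2).elim
    | inl a2 =>
    cases hf3 : f 3 with
    | inr b3 => exact (crossLR f h03 hf0 hf3).elim
    | inl a3 =>
    cases hf1 : f 1 with
    | inr b1 =>
      rcases h1 with h01 | h13
      · exact (crossLR f h01 hf0 hf1).elim
      · exact (crossRL f h13 hf1 hf3).elim
    | inl a1 =>
      left; intro i; fin_cases i
      exacts [⟨a0, hf0⟩, ⟨a1, hf1⟩, ⟨a2, hf2⟩, ⟨a3, hf3⟩]
  | inr b0 =>
    cases hf2 : f 2 with
    | inl a2 => exact (crossRL f h02 hf0 hf2).elim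
    | inr b2 =>
    cases hf3 : f 3 with
    | inl a3 => exact (crossRL f h03 hf0 hf3).elim
    | inr b3 =>
    cases hf1 : f 1 with
    | inl a1 =>
      rcases h1 with h01 | h13
      · exact (crossRL f h01 hf0 hf1).elim
      · exact (crossLR f h13 hf1 hf3).elim
    | inr b1 =>
      right; intro i; fin_cases i
      exacts [⟨b0, hf0⟩, ⟨b1, hf1⟩, ⟨b2, hf2⟩, ⟨b3, hf3⟩]

end Aux

theorem join_P4_K1uK3_free {α β : Type*} [Fintype α] [Fintype β]
    (H1 : SimpleGraph α) (H2 : SimpleGraph β) :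
    (InducedFree P4 (graphJoin H1 H2) ∧ InducedFree K1uK3 (graphJoin H1 H2)) ↔
      ((InducedFree P4 H1 ∧ InducedFree K1uK3 H1) ∧
       (InducedFree P4 H2 ∧ InducedFree K1uK3 H2)) := by
  have p02 : ¬ P4.Adj 0 2 := by simp [P4]
  have p03 : ¬ P4.Adj 0 3 := by simp [P4]
  have p13 : ¬ P4.Adj 1 3 := by simp [P4]
  have k02 : ¬ K1uK3.Adj 0 2 := by simp [K1uK3]
  have k03 : ¬ K1uK3.Adj 0 3 := by simp [K1uK3]
  have k01 : ¬ K1uK3.Adj 0 1 := by simp [K1uK3]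
  constructor
  · rintro ⟨hP, hK⟩
    refine ⟨⟨fun ⟨e⟩ => hP ⟨(inlEmb H1 H2).comp e⟩, fun ⟨e⟩ => hK ⟨(inlEmb H1 H2).comp e⟩⟩,
      ⟨fun ⟨e⟩ => hP ⟨(inrEmb H1 H2).comp e⟩, fun ⟨e⟩ => hK ⟨(inrEmb H1 H2).comp e⟩⟩⟩
  · rintro ⟨⟨hP1, hK1⟩, ⟨hP2, hK2⟩⟩
    constructor
    · rintro ⟨f⟩
      rcases split p02 p03 (Or.inr p13) f with h | h
      · exact hP1 (left_emb f h)
      · exact hP2 (right_emb f h)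
    · rintro ⟨f⟩
      rcases split k02 k03 (Or.inl k01) f with h | h
      · exact hK1 (left_emb f h)
      · exact hK2 (right_emb f h)
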